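/- arXiv:1712.00448 — 3 statements merged into one kernel-verified Lean document; each statement's English description precedes it below -/
import Mathlib

section
/- Let α > 0, β > 0, p ∈ ℝ, a < 0 < b. If u ∈ [a,b] and λ is a subgradient of |·| at u satisfying (p + αu + βλ)(v - u) ≥ 0 for all v ∈ [a,b], then λ = Π_{[-1,1]}(-p/β). In particular, the subgradient λ satisfying the variational inequality is uniquely determined by p. -/
/-- If `u ∈ [a,b]` and `λ` is a subgradient of `|·|` at `u` satisfying the
variational inequality, then `λ = Π_{[-1,1]}(-p/β)`; in particular the subgradient
satisfying the variational inequality is uniquely determined by `p`. -/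
theorem projection_formula_subgradient
    (α β p a b u lam : ℝ)
    (hα : 0 < α) (hβ : 0 < β) (ha : a < 0) (hb : 0 < b)
    (hu : u ∈ Set.Icc a b)
    (hsub : ∀ s : ℝ, lam * (s - u) ≤ |s| - |u|)
    (hvi : ∀ v ∈ Set.Icc a b, 0 ≤ (p + α * u + β * lam) * (v - u)) :
    lam = min 1 (max (-1) (-p / β)) := by
  obtain ⟨hau, hub⟩ := hu
  have h0 : (0:ℝ) ∈ Set.Icc a b := ⟨ha.le, hb.le⟩
  have hg0 := hvi 0 h0
  rcases lt_trichotomy u 0 with hu0 | hu0 | hu0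
  · -- u < 0, so lam = -1
    have h1 := hsub 0
    have h2 := hsub (2*u)
    rw [abs_of_neg hu0] at h1 h2
    rw [abs_of_neg (by linarith : 2*u < 0)] at h2
    simp only [abs_zero] at h1
    have hlam : lam = -1 := by nlinarith
    -- VI at v = 0 gives g ≥ 0, i.e. p + αu - β ≥ 0, so -p/β < -1
    have hg : 0 ≤ p + α * u + β * lam := by
      by_contra hc
      push_neg at hc
      nlinarith [mul_pos (neg_pos.mpr hc) (show (0:ℝ) < 0 - u by linarith)]
    have hple : -p / β ≤ -1 := by
      rw [div_le_iff₀ hβ]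
      nlinarith
    rw [hlam, max_eq_left hple, min_eq_right (by norm_num)]
  · -- u = 0, so lam = -p/β
    subst hu0
    have hga := hvi a ⟨le_refl a, by linarith⟩
    have hgb := hvi b ⟨by linarith, le_refl b⟩
    simp only [sub_zero, mul_zero] at hga hgb
    have hg1 : 0 ≤ p + α * 0 + β * lam := by nlinarith
    have hg2 : p + α * 0 + β * lam ≤ 0 := by nlinarith
    have hlam : lam = -p / β := by
      rw [eq_div_iff hβ.ne']
      nlinarith
    have h1 := hsub 1
    have h2 := hsub (-1)
    simp only [abs_zero, abs_one, abs_neg, sub_zero] at h1 h2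
    rw [← hlam, max_eq_right (by nlinarith), min_eq_right (by nlinarith)]
  · -- u > 0, so lam = 1
    have h1 := hsub 0
    have h2 := hsub (2*u)
    rw [abs_of_pos hu0] at h1 h2
    rw [abs_of_pos (by linarith : (0:ℝ) < 2*u)] at h2
    simp only [abs_zero] at h1
    have hlam : lam = 1 := by nlinarith
    have hg : p + α * u + β * lam ≤ 0 := by
      by_contra hc
      push_neg at hc
      nlinarith [mul_pos hc (show (0:ℝ) < u - 0 by linarith)]
    have hple : 1 ≤ -p / β := by
      rw [le_div_iff₀ hβ]
      nlinarith
    rw [hlam, max_eq_right (by linarith), min_eq_left hple]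
end

section
/- Let α, β > 0 and a < 0 < b. For i = 1,…,n let wᵢ > 0 and pᵢ ∈ ℝ. Suppose u ∈ [a,b]ⁿ and λ is a subgradient of ψ(u) = Σᵢ wᵢ|uᵢ| (with respect to the weighted inner product) such that Σᵢ wᵢ (pᵢ + αuᵢ + βλᵢ)(vᵢ - uᵢ) ≥ 0 for all v ∈ [a,b]ⁿ. Then for every i, uᵢ = Π_{[a,b]}(-(pᵢ + βλᵢ)/α) and λᵢ = Π_{[-1,1]}(-pᵢ/β); in particular λ is uniquely determined. -/
open Finset

/-- Discrete projection formulas: if `u ∈ [a,b]ⁿ` and `λ` is a subgradient of the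
weighted `ℓ¹` functional at `u` satisfying the discrete variational inequality,
then componentwise `uᵢ = Π_{[a,b]}(-(pᵢ + βλᵢ)/α)` and `λᵢ = Π_{[-1,1]}(-pᵢ/β)`;
in particular `λ` is uniquely determined. -/
theorem discrete_projection_formulas
    (n : ℕ) (w p : Fin n → ℝ) (hw : ∀ i, 0 < w i)
    (α β a b : ℝ) (hα : 0 < α) (hβ : 0 < β) (ha : a < 0) (hb : 0 < b)
    (u lam : Fin n → ℝ) (hu : ∀ i, u i ∈ Set.Icc a b)
    (hsub : ∀ v : Fin n → ℝ,
      ∑ i, w i * lam i * (v i - u i) ≤ (∑ i, w i * |v i|) - ∑ i, w i * |u i|)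
    (hvi : ∀ v : Fin n → ℝ, (∀ i, v i ∈ Set.Icc a b) →
      0 ≤ ∑ i, w i * (p i + α * u i + β * lam i) * (v i - u i)) :
    ∀ i, u i = min b (max a (-(p i + β * lam i) / α)) ∧
      lam i = min 1 (max (-1) (-p i / β)) := by
  intro j
  have hwj := hw j
  have hab : a ≤ b := le_of_lt (ha.trans hb)
  obtain ⟨hau, hub⟩ := hu j
  set g : ℝ := p j + α * u j + β * lam j with hg
  have hupd : ∀ t : ℝ, t ∈ Set.Icc a b → ∀ i, Function.update u j t i ∈ Set.Icc a b := by
    intro t ht i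
    by_cases h : i = j
    · subst h; simpa using ht
    · simpa [Function.update_of_ne h] using hu i
  have key : ∀ c : Fin n → ℝ, ∀ t : ℝ,
      ∑ i, c i * (Function.update u j t i - u i) = c j * (t - u j) := by
    intro c t
    rw [Finset.sum_eq_single j]
    · simp
    · intro i _ hij; simp [Function.update_of_ne hij]
    · simp
  have hsub' : ∀ t : ℝ, lam j * (t - u j) ≤ |t| - |u j| := by
    intro t
    have h := hsub (Function.update u j t)
    rw [← Finset.sum_sub_distrib] at h
    have h1 : ∑ i, w i * lam i * (Function.update u j t i - u i)
        = w j * lam j * (t - u j) := key (fun i => w i * lam i) t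
    have h2 : ∑ i, (w i * |Function.update u j t i| - w i * |u i|)
        = w j * (|t| - |u j|) := by
      rw [Finset.sum_eq_single j]
      · simp [mul_sub]
      · intro i _ hij; simp [Function.update_of_ne hij]
      · simp
    rw [h1, h2] at h
    rw [mul_assoc] at h
    exact le_of_mul_le_mul_left h hwj
  have hvi' : ∀ t : ℝ, t ∈ Set.Icc a b → 0 ≤ g * (t - u j) := by
    intro t ht
    have h := hvi (Function.update u j t) (hupd t ht)
    have h1 : ∑ i, w i * (p i + α * u i + β * lam i) * (Function.update u j t i - u i)
        = w j * g * (t - u j) := key (fun i => w i * (p i + α * u i + β * lam i)) t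
    rw [h1] at h
    nlinarith [mul_pos hwj hwj]
  have hl1 : lam j ≤ 1 := by
    have h := hsub' (u j + 1)
    have habs : |u j + 1| - |u j| ≤ 1 := by
      have := abs_sub_abs_le_abs_sub (u j + 1) (u j)
      simpa using this
    nlinarith
  have hl2 : -1 ≤ lam j := by
    have h := hsub' (u j - 1)
    have habs : |u j - 1| - |u j| ≤ 1 := by
      have h2 := abs_sub_abs_le_abs_sub (u j - 1) (u j)
      have h3 : u j - 1 - u j = -1 := by ring
      rw [h3] at h2
      simpa using h2
    nlinarith
  have hlu : |u j| ≤ lam j * u j := by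
    have h0 := hsub' 0
    rw [abs_zero] at h0
    nlinarith
  have hgb : u j < b → 0 ≤ g := by
    intro h
    have h1 := hvi' b ⟨hab, le_refl b⟩
    by_contra hc
    push_neg at hc
    nlinarith [mul_neg_of_neg_of_pos hc (by linarith : (0:ℝ) < b - u j)]
  have hga : a < u j → g ≤ 0 := by
    intro h
    have h1 := hvi' a ⟨le_refl a, hab⟩
    by_contra hc
    push_neg at hc
    nlinarith [mul_pos hc (by linarith : (0:ℝ) < u j - a)]
  constructor
  · -- projection formula for u
    have hx : -(p j + β * lam j) / α = u j - g / α := by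
      field_simp
      ring
    rw [hx]
    rcases eq_or_lt_of_le hau with hA | hA
    · -- u j = a
      have hgpos : 0 ≤ g := hgb (by linarith : u j < b)
      have hle : u j - g / α ≤ a := by
        have : 0 ≤ g / α := div_nonneg hgpos hα.le
        linarith
      rw [max_eq_left hle, min_eq_right hab, ← hA]
    · rcases eq_or_lt_of_le hub with hB | hB
      · -- u j = b
        have hgneg : g ≤ 0 := hga hA
        have hge : b ≤ u j - g / α := by
          have h2 : g / α ≤ 0 := div_nonpos_of_nonpos_of_nonneg hgneg hα.le
          linarith
        rw [max_eq_right (le_trans hab hge), min_eq_left hge, hB]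
      · -- interior
        have hg0 : g = 0 := le_antisymm (hga hA) (hgb hB)
        rw [hg0]
        simp
        rw [max_eq_right hau, min_eq_right hub]
  · -- projection formula for lam
    rcases lt_trichotomy (u j) 0 with hU | hU | hU
    · -- u j < 0 : lam j = -1
      have habs : |u j| = -u j := abs_of_neg hU
      rw [habs] at hlu
      have hlam : lam j = -1 := by
        have h1 : (lam j + 1) * u j ≥ 0 := by nlinarith
        have h2 : lam j ≤ -1 := by
          by_contra hc
          push_neg at hc
          nlinarith [mul_neg_of_pos_of_neg (by linarith : 0 < lam j + 1) hU]
        linarith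
      have hgpos : 0 ≤ g := hgb (by linarith : u j < b)
      have hple : -p j / β ≤ -1 := by
        rw [div_le_iff₀ hβ]
        rw [hlam] at hg
        nlinarith
      rw [hlam, max_eq_left hple, min_eq_right (by norm_num : (-1:ℝ) ≤ 1)]
    · -- u j = 0 : lam j = -p j / β
      have hg0 : g = 0 := le_antisymm (hga (by linarith)) (hgb (by linarith))
      have hlam : lam j = -p j / β := by
        rw [eq_div_iff (ne_of_gt hβ)]
        rw [hU] at hg
        nlinarith
      rw [← hlam, max_eq_right hl2, min_eq_right hl1]
    · -- u j > 0 : lam j = 1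
      have habs : |u j| = u j := abs_of_pos hU
      rw [habs] at hlu
      have hlam : lam j = 1 := by
        have h2 : 1 ≤ lam j := by
          by_contra hc
          push_neg at hc
          nlinarith [mul_lt_mul_of_pos_right hc hU]
        linarith
      have hgneg : g ≤ 0 := hga (by linarith : a < u j)
      have hpge : 1 ≤ -p j / β := by
        rw [le_div_iff₀ hβ]
        rw [hlam] at hg
        nlinarith
      rw [hlam, max_eq_right (by linarith : (-1:ℝ) ≤ -p j / β), min_eq_left hpge]
end

section
/- Let a ≤ b be reals and f : ℝ → ℝ, f(p) = α⁻¹[max(0, -p - β) + min(0, -p + β) - max(0, -p - β - αb) - min(0, -p + β - αa)] with α, β > 0 and a < 0 < b. Then f(p) = Π_{[a,b]}(-α⁻¹(p + β Π_{[-1,1]}(-β⁻¹ p))). -/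
/-- Stadler's max/min identity for the projected control:
`α⁻¹[max(0,-p-β) + min(0,-p+β) - max(0,-p-β-αb) - min(0,-p+β-αa)]
 = Π_{[a,b]}(-α⁻¹(p + β Π_{[-1,1]}(-β⁻¹ p)))`. -/
theorem stadler_maxmin_identity
    (α β a b : ℝ) (hα : 0 < α) (hβ : 0 < β) (ha : a < 0) (hb : 0 < b) (p : ℝ) :
    α⁻¹ * (max 0 (-p - β) + min 0 (-p + β)
        - max 0 (-p - β - α * b) - min 0 (-p + β - α * a))
      = min b (max a (-α⁻¹ * (p + β * min 1 (max (-1) (-β⁻¹ * p))))) := by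
  have hα' : (0:ℝ) < α⁻¹ := by positivity
  have hβ' : (0:ℝ) < β⁻¹ := by positivity
  have hαα : α * α⁻¹ = 1 := mul_inv_cancel₀ hα.ne'
  have hββ : β * β⁻¹ = 1 := mul_inv_cancel₀ hβ.ne'
  have hab : 0 < α * b := mul_pos hα hb
  have haa : α * a < 0 := mul_neg_of_pos_of_neg hα ha
  rcases le_total p (-β) with hp1 | hp1
  · -- p ≤ -β : inner projection is 1
    have hin : max (-1) (-β⁻¹ * p) = -β⁻¹ * p :=
      max_eq_right (by nlinarith [mul_nonneg hβ'.le (show (0:ℝ) ≤ -β - p by linarith)])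
    have hin2 : min 1 (max (-1) (-β⁻¹ * p)) = 1 := by
      rw [hin]; exact min_eq_left (by nlinarith [mul_nonneg hβ'.le (show (0:ℝ) ≤ -β - p by linarith)])
    rw [hin2]
    rcases le_total p (-β - α * b) with hp2 | hp2
    · rw [max_eq_right (by linarith), min_eq_left (by linarith),
        max_eq_right (by linarith), min_eq_left (by linarith),
        max_eq_right (le_of_lt (by nlinarith [mul_nonneg hα'.le (show (0:ℝ) ≤ -p - β - α*b by linarith)] : a < -α⁻¹ * (p + β * 1))),
        min_eq_left (by nlinarith [mul_nonneg hα'.le (show (0:ℝ) ≤ -p - β - α*b by linarith)])]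
      field_simp
      ring
    · rw [max_eq_right (by linarith), min_eq_left (by linarith),
        max_eq_left (by linarith), min_eq_left (by linarith),
        max_eq_right (le_of_lt (by nlinarith [mul_nonneg hα'.le (show (0:ℝ) ≤ -p - β by linarith)] : a < -α⁻¹ * (p + β * 1))),
        min_eq_right (by nlinarith [mul_nonneg hα'.le (show (0:ℝ) ≤ p + β + α*b by linarith)])]
      ring
  · rcases le_total p β with hp3 | hp3
    · -- -β ≤ p ≤ β : inner projection is -β⁻¹ p, everything is 0
      have hin : max (-1) (-β⁻¹ * p) = -β⁻¹ * p :=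
        max_eq_right (by nlinarith [mul_nonneg hβ'.le (show (0:ℝ) ≤ β - p by linarith)])
      have hin2 : min 1 (max (-1) (-β⁻¹ * p)) = -β⁻¹ * p := by
        rw [hin]; exact min_eq_right (by nlinarith [mul_nonneg hβ'.le (show (0:ℝ) ≤ p + β by linarith)])
      rw [hin2]
      have hcore : p + β * (-β⁻¹ * p) = 0 := by
        field_simp
        ring
      rw [hcore, mul_zero,
        max_eq_left (by linarith), min_eq_left (by linarith),
        max_eq_left (by linarith), min_eq_left (by linarith),
        max_eq_right ha.le, min_eq_right hb.le]
      ring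
    · -- β ≤ p : inner projection is -1
      have hin2 : min 1 (max (-1) (-β⁻¹ * p)) = -1 := by
        rcases max_cases (-1 : ℝ) (-β⁻¹ * p) with ⟨h, _⟩ | ⟨h, _⟩
        · rw [h]; exact min_eq_right (by linarith)
        · rw [h]
          have : -β⁻¹ * p ≤ -1 := by
            nlinarith [mul_nonneg hβ'.le (show (0:ℝ) ≤ p - β by linarith)]
          linarith
      rw [hin2]
      rcases le_total p (β - α * a) with hp4 | hp4
      · rw [max_eq_left (by linarith), min_eq_right (by linarith),
          max_eq_left (by linarith), min_eq_left (by linarith),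
          max_eq_right (by nlinarith [mul_nonneg hα'.le (show (0:ℝ) ≤ β - α*a - p by linarith)]),
          min_eq_right (by nlinarith [mul_nonneg hα'.le (show (0:ℝ) ≤ p - β by linarith)])]
        ring
      · rw [max_eq_left (by linarith), min_eq_right (by linarith),
          max_eq_left (by linarith), min_eq_right (by linarith),
          max_eq_left (by nlinarith [mul_nonneg hα'.le (show (0:ℝ) ≤ p - β + α*a by linarith)]),
          min_eq_right (by linarith)]
        field_simp
        ring
end
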